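/- If T₁ is obtained from a tree T by a proper generalized tree shift, then the number of pendant vertices of T₁ equals the number of pendant vertices of T plus one. -/
import Mathlib


open SimpleGraph Matrix BigOperators Finset

noncomputable section

/-- Distance matrix of a graph on `Fin n`, with real entries. -/
def distM {n : ℕ} (G : SimpleGraph (Fin n)) : Matrix (Fin n) (Fin n) ℝ :=
  fun i j => (G.dist i j : ℝ)

/-- Transmission of a vertex: sum of distances to all vertices. -/
def transm {n : ℕ} (G : SimpleGraph (Fin n)) (i : Fin n) : ℝ :=
  ∑ j, (G.dist i j : ℝ)

/-- Diagonal matrix of transmissions. -/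
def trM {n : ℕ} (G : SimpleGraph (Fin n)) : Matrix (Fin n) (Fin n) ℝ :=
  Matrix.diagonal (transm G)

/-- Distance signless Laplacian. -/
def DQ {n : ℕ} (G : SimpleGraph (Fin n)) : Matrix (Fin n) (Fin n) ℝ :=
  trM G + distM G

/-- The `D_α` matrix. -/
def Dalpha {n : ℕ} (G : SimpleGraph (Fin n)) (α : ℝ) : Matrix (Fin n) (Fin n) ℝ :=
  α • trM G + (1 - α) • distM G

/-- Largest eigenvalue of a real matrix. -/
def lam1 {n : ℕ} (M : Matrix (Fin n) (Fin n) ℝ) : ℝ :=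
  sSup {t : ℝ | ∃ v : Fin n → ℝ, v ≠ 0 ∧ M.mulVec v = t • v}

/-- Degree of a vertex. -/
def deg {n : ℕ} (G : SimpleGraph (Fin n)) (x : Fin n) : ℕ :=
  (G.neighborSet x).ncard

/-- Number of pendant (degree-one) vertices. -/
def pendants {n : ℕ} (G : SimpleGraph (Fin n)) : ℕ :=
  {x : Fin n | deg G x = 1}.ncard

/-- Diameter: supremum of pairwise distances. -/
def gdiam {n : ℕ} (G : SimpleGraph (Fin n)) : ℕ :=
  sSup {d : ℕ | ∃ x y : Fin n, G.dist x y = d}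

/-- The graph obtained by moving all edges at `v` except `vw` to `u`. -/
def shift {n : ℕ} (T : SimpleGraph (Fin n)) (u v w : Fin n) : SimpleGraph (Fin n) :=
  SimpleGraph.fromRel (fun a b =>
    (T.Adj a b ∧ ((a ≠ v ∧ b ≠ v) ∨ (a = v ∧ b = w) ∨ (b = v ∧ a = w))) ∨
    (a = u ∧ T.Adj v b ∧ b ≠ w))

/-- `T₁` is obtained from `T` by a proper generalized tree shift. -/
def IsProperGTS {n : ℕ} (T T₁ : SimpleGraph (Fin n)) : Prop :=
  ∃ (u v w : Fin n) (p : T.Walk u v), u ≠ v ∧ p.IsPath ∧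
    T.Adj w v ∧ w ∈ p.support ∧
    (∀ x ∈ p.support, x ≠ u → x ≠ v → deg T x = 2) ∧
    deg T u ≠ 1 ∧ deg T v ≠ 1 ∧ T₁ = shift T u v w

/-- The Kelmans transformation at vertices `u`, `v`. -/
def kelmans {n : ℕ} (T : SimpleGraph (Fin n)) (u v : Fin n) : SimpleGraph (Fin n) :=
  SimpleGraph.fromRel (fun a b =>
    (T.Adj a b ∧ ¬(a = v ∧ ¬T.Adj u b ∧ b ≠ u) ∧ ¬(b = v ∧ ¬T.Adj u a ∧ a ≠ u)) ∨
    (a = u ∧ T.Adj v b ∧ ¬T.Adj u b ∧ b ≠ u))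

/-- Collapse the edge `ab` (identifying into `a`) and reuse `b` as a new pendant at `a`. -/
def collapseAddPendant {n : ℕ} (T : SimpleGraph (Fin n)) (a b : Fin n) : SimpleGraph (Fin n) :=
  SimpleGraph.fromRel (fun x y =>
    (x ≠ a ∧ x ≠ b ∧ y ≠ a ∧ y ≠ b ∧ T.Adj x y) ∨
    (x = a ∧ y ≠ a ∧ y ≠ b ∧ (T.Adj a y ∨ T.Adj b y)) ∨
    (x = a ∧ y = b))

/-- The star `K_{1,n-1}` with centre `0`. -/
def starG (n : ℕ) [NeZero n] : SimpleGraph (Fin n) :=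
  SimpleGraph.fromRel (fun a b => a = 0 ∨ b = 0)

/-- Irreducibility of a nonnegative matrix. -/
def IrreducibleM {n : ℕ} (M : Matrix (Fin n) (Fin n) ℝ) : Prop :=
  ∀ i j : Fin n, i ≠ j → ∃ k : ℕ, 0 < (M ^ k) i j


/-- `T` is a star: some centre is adjacent to exactly the other vertices, and
there are no other edges. -/
def IsStar {n : ℕ} (T : SimpleGraph (Fin n)) : Prop :=
  ∃ c : Fin n, ∀ a b : Fin n, T.Adj a b ↔ (a ≠ b ∧ (a = c ∨ b = c))

/-- The all-ones matrix. -/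
def Jmat (n : ℕ) : Matrix (Fin n) (Fin n) ℝ := Matrix.of fun _ _ => 1

lemma tree_path_unique {n : ℕ} {T : SimpleGraph (Fin n)} (hT : T.IsTree) {a b : Fin n}
    {p q : T.Walk a b} (hp : p.IsPath) (hq : q.IsPath) : p = q :=
  congrArg Subtype.val (SimpleGraph.isAcyclic_iff_path_unique.mp hT.2 ⟨p, hp⟩ ⟨q, hq⟩)

theorem stmt_8 (n : ℕ) (T T₁ : SimpleGraph (Fin n)) (hT : T.IsTree)
    (h : IsProperGTS T T₁) : pendants T₁ = pendants T + 1 := by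
  obtain ⟨u, v, w, p, huv, hp, hwv, hws, hdeg2, hdu, hdv, rfl⟩ := h
  have hwne : w ≠ v := hwv.ne
  -- F0 : if u adj v then w = u
  have F0 : T.Adj u v → w = u := by
    intro huvadj
    have hq : p = (SimpleGraph.Path.singleton huvadj).1 :=
      tree_path_unique hT hp (SimpleGraph.Path.singleton huvadj).2
    rw [hq] at hws
    simp [SimpleGraph.Path.singleton] at hws
    rcases hws with h1 | h1
    · exact h1
    · exact absurd h1 hwne
  -- F1a : neighbors of v other than w are not u
  have F1a : ∀ b, T.Adj v b → b ≠ w → b ≠ u := by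
    intro b hvb hbw h1
    subst h1
    exact hbw (F0 hvb.symm).symm
  -- F1b : neighbors of v other than w are not adjacent to u
  have F1b : ∀ b, T.Adj v b → b ≠ w → ¬ T.Adj u b := by
    intro b hvb hbw hub
    have hbu := F1a b hvb hbw
    have hbv : b ≠ v := hvb.ne'
    have hq : (SimpleGraph.Walk.cons hub (SimpleGraph.Walk.cons hvb.symm SimpleGraph.Walk.nil) :
        T.Walk u v).IsPath := by
      simp [SimpleGraph.Walk.cons_isPath_iff, hbv, huv, Ne.symm hbu]
    have hpq := tree_path_unique hT hp hq
    rw [hpq] at hws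
    simp at hws
    rcases hws with h1 | h1 | h1
    · have huvadj : T.Adj u v := h1 ▸ hwv
      have h2 : (SimpleGraph.Walk.cons hub (SimpleGraph.Walk.cons hvb.symm SimpleGraph.Walk.nil) :
          T.Walk u v) = (SimpleGraph.Path.singleton huvadj).1 :=
        tree_path_unique hT hq (SimpleGraph.Path.singleton huvadj).2
      have := congrArg SimpleGraph.Walk.length h2
      simp [SimpleGraph.Path.singleton] at this
    · exact hbw h1.symm
    · exact hwne h1
  -- adjacency characterization of shift
  have hS : ∀ a b : Fin n, (shift T u v w).Adj a b ↔ a ≠ b ∧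
      ((T.Adj a b ∧ ((a ≠ v ∧ b ≠ v) ∨ (a = v ∧ b = w) ∨ (b = v ∧ a = w))) ∨
       (a = u ∧ T.Adj v b ∧ b ≠ w) ∨
       (T.Adj b a ∧ ((b ≠ v ∧ a ≠ v) ∨ (b = v ∧ a = w) ∨ (a = v ∧ b = w))) ∨
       (b = u ∧ T.Adj v a ∧ a ≠ w)) := by
    intro a b
    simp only [shift, SimpleGraph.fromRel_adj, or_assoc]
  -- neighbor set of v is {w}
  have Nv : (shift T u v w).neighborSet v = {w} := by
    ext b
    simp only [SimpleGraph.mem_neighborSet, hS, Set.mem_singleton_iff]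
    constructor
    · rintro ⟨hne, (⟨hadj, hc⟩ | ⟨h1, -, -⟩ | ⟨hadj, hc⟩ | ⟨-, h2, -⟩)⟩
      · rcases hc with ⟨h, -⟩ | ⟨-, h⟩ | ⟨h, -⟩
        · exact absurd rfl h
        · exact h
        · exact absurd h.symm hne
      · exact absurd h1 (Ne.symm huv)
      · rcases hc with ⟨-, h⟩ | ⟨h, -⟩ | ⟨-, h⟩
        · exact absurd rfl h
        · exact absurd h.symm hne
        · exact h
      · exact absurd h2 T.irrefl
    · rintro rfl
      exact ⟨Ne.symm hwne, Or.inl ⟨hwv.symm, Or.inr (Or.inl (by simp))⟩⟩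
  -- neighbor set of u
  have Nu : (shift T u v w).neighborSet u =
      T.neighborSet u ∪ (T.neighborSet v \ {w}) := by
    ext b
    simp only [SimpleGraph.mem_neighborSet, hS, Set.mem_union, Set.mem_diff,
      Set.mem_singleton_iff]
    constructor
    · rintro ⟨hne, (⟨hadj, hc⟩ | ⟨-, h2, h3⟩ | ⟨hadj, hc⟩ | ⟨h1, -, -⟩)⟩
      · exact Or.inl hadj
      · exact Or.inr ⟨h2, h3⟩
      · rcases hc with ⟨-, -⟩ | ⟨h1, h2⟩ | ⟨h1, -⟩
        · exact Or.inl hadj.symm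
        · exact Or.inl hadj.symm
        · exact absurd h1 huv
      · exact absurd h1.symm hne
    · rintro (hb | ⟨hb, hbw⟩)
      · refine ⟨hb.ne, Or.inl ⟨hb, ?_⟩⟩
        by_cases hbv : b = v
        · subst hbv
          exact Or.inr (Or.inr (by simp [(F0 hb).symm]))
        · exact Or.inl ⟨huv, hbv⟩
      · exact ⟨Ne.symm (F1a b hb hbw), Or.inr (Or.inl (by simp [hb, hbw]))⟩
  -- neighbor set of w (when w ≠ u)
  have Nw : w ≠ u → (shift T u v w).neighborSet w = T.neighborSet w := by
    intro hwu
    ext b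
    simp only [SimpleGraph.mem_neighborSet, hS]
    constructor
    · rintro ⟨hne, (⟨hadj, -⟩ | ⟨h1, -, -⟩ | ⟨hadj, -⟩ | ⟨-, -, h3⟩)⟩
      · exact hadj
      · exact absurd h1 hwu
      · exact hadj.symm
      · exact absurd rfl h3
    · intro hb
      refine ⟨hb.ne, Or.inl ⟨hb, ?_⟩⟩
      by_cases hbv : b = v
      · exact Or.inr (Or.inr (by simp [hbv]))
      · exact Or.inl ⟨hwne, hbv⟩
  -- neighbor set of other vertices adjacent to v
  have NxA : ∀ x, x ≠ u → x ≠ v → x ≠ w → T.Adj v x →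
      (shift T u v w).neighborSet x = insert u (T.neighborSet x \ {v}) := by
    intro x hxu hxv hxw hvx
    ext b
    simp only [SimpleGraph.mem_neighborSet, hS, Set.mem_insert_iff, Set.mem_diff,
      Set.mem_singleton_iff]
    constructor
    · rintro ⟨hne, (⟨hadj, hc⟩ | ⟨h1, -, -⟩ | ⟨hadj, hc⟩ | ⟨h1, -, -⟩)⟩
      · rcases hc with ⟨-, h2⟩ | ⟨h1, -⟩ | ⟨-, h2⟩
        · exact Or.inr ⟨hadj, h2⟩
        · exact absurd h1 hxv
        · exact absurd h2 hxw
      · exact absurd h1 hxu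
      · rcases hc with ⟨h1, -⟩ | ⟨-, h2⟩ | ⟨h1, -⟩
        · exact Or.inr ⟨hadj.symm, h1⟩
        · exact absurd h2 hxw
        · exact absurd h1 hxv
      · exact Or.inl h1
    · rintro (rfl | ⟨hb, hbv⟩)
      · exact ⟨hxu, Or.inr (Or.inr (Or.inr (by simp [hvx, hxw])))⟩
      · exact ⟨hb.ne, Or.inl ⟨hb, Or.inl ⟨hxv, hbv⟩⟩⟩
  -- neighbor set of other vertices not adjacent to v
  have NxB : ∀ x, x ≠ u → x ≠ v → ¬ T.Adj v x →
      (shift T u v w).neighborSet x = T.neighborSet x := by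
    intro x hxu hxv hvx
    ext b
    simp only [SimpleGraph.mem_neighborSet, hS]
    constructor
    · rintro ⟨hne, (⟨hadj, -⟩ | ⟨h1, -, -⟩ | ⟨hadj, -⟩ | ⟨-, h2, -⟩)⟩
      · exact hadj
      · exact absurd h1 hxu
      · exact hadj.symm
      · exact absurd h2 hvx
    · intro hb
      have hbv : b ≠ v := by
        rintro rfl
        exact hvx hb.symm
      exact ⟨hb.ne, Or.inl ⟨hb, Or.inl ⟨hxv, hbv⟩⟩⟩
  -- basic degree facts
  have hvw_mem : w ∈ T.neighborSet v := hwv.symm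
  have hdv2 : 2 ≤ deg T v := by
    have h1 : 0 < deg T v := (Set.ncard_pos (Set.toFinite _)).mpr ⟨w, hvw_mem⟩
    omega
  have hdu2 : 2 ≤ deg T u := by
    have h1 : (T.neighborSet u).Nonempty := by
      clear hp hws hdeg2 F0 F1a F1b
      cases p with
      | nil => exact absurd rfl huv
      | cons hadj q => exact ⟨_, hadj⟩
    have h2 : 0 < deg T u := (Set.ncard_pos (Set.toFinite _)).mpr h1
    omega
  -- degree of v in the shift
  have degv : deg (shift T u v w) v = 1 := by
    rw [deg, Nv, Set.ncard_singleton]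
  -- degree of u in the shift
  have degu : deg (shift T u v w) u ≠ 1 := by
    have hdisj : Disjoint (T.neighborSet u) (T.neighborSet v \ {w}) := by
      rw [Set.disjoint_left]
      rintro b hbu ⟨hbv, hbw⟩
      exact F1b b hbv hbw hbu
    rw [deg, Nu, Set.ncard_union_eq hdisj (Set.toFinite _) (Set.toFinite _)]
    have h1 : (T.neighborSet u).ncard = deg T u := rfl
    omega
  -- degree of w in the shift (when w ≠ u)
  have degw : w ≠ u → deg (shift T u v w) w = deg T w := by
    intro hwu
    rw [deg, Nw hwu, deg]
  -- degree of the other vertices in the shift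
  have degx : ∀ x, x ≠ u → x ≠ v → x ≠ w → deg (shift T u v w) x = deg T x := by
    intro x hxu hxv hxw
    by_cases hvx : T.Adj v x
    · rw [deg, NxA x hxu hxv hxw hvx]
      have huNx : u ∉ T.neighborSet x \ {v} := by
        rintro ⟨hux, -⟩
        exact F1b x hvx hxw hux.symm
      rw [Set.ncard_insert_of_notMem huNx (Set.toFinite _)]
      have hvNx : v ∈ T.neighborSet x := hvx.symm
      have h1 := Set.ncard_diff_singleton_add_one hvNx (Set.toFinite _)
      rw [deg]
      omega
    · rw [deg, NxB x hxu hxv hvx, deg]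
  -- the pendant sets
  have hset : {x : Fin n | deg (shift T u v w) x = 1} =
      insert v {x : Fin n | deg T x = 1} := by
    ext x
    simp only [Set.mem_setOf_eq, Set.mem_insert_iff]
    by_cases hxv : x = v
    · subst hxv
      simp [degv]
    constructor
    · intro hx
      right
      by_cases hxu : x = u
      · subst hxu
        exact absurd hx degu
      by_cases hxw : x = w
      · subst hxw
        rw [degw hxu] at hx
        exact hx
      · rw [degx x hxu hxv hxw] at hx
        exact hx
    · rintro (h1 | hx)
      · exact absurd h1 hxv
      have hxu : x ≠ u := by
        rintro rfl
        exact hdu hx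
      by_cases hxw : x = w
      · subst hxw
        rw [degw hxu]
        exact hx
      · rw [degx x hxu hxv hxw]
        exact hx
  rw [pendants, pendants, hset]
  exact Set.ncard_insert_of_notMem (fun h => hdv h) (Set.toFinite _)
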